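/- Let g be a Lie algebra with invariant inner product, k ⊆ g a subalgebra with orthogonal complement p satisfying [k,k] ⊆ k and [k,p] ⊆ p. Let P : g → ℝ be a polynomial invariant under the adjoint action of g (equivalently ⟨∇P(x),[ξ,x]⟩ = 0 for all ξ ∈ g). For λ ∈ ℝ define P_λ(x) = P(pr_k(x) + λ pr_p(x)). Then P_λ is ad_k-invariant: ⟨∇P_λ(x), [ξ, x]⟩ = 0 for all ξ ∈ k and all x ∈ g. -/

import Mathlib

open RealInnerProductSpace

/-- Let `E` be a finite-dimensional real Lie algebra (bracket `bk`) with an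
invariant inner product, `K` a Lie subalgebra with orthogonal complement `p = Kᗮ`
satisfying `[K, K] ⊆ K` and `[K, Kᗮ] ⊆ Kᗮ`.  If `P` is a differentiable adjoint-invariant
function (`[∇P(y), y] = 0` for all `y`) and `Pl x = P (pr_K x + l • pr_p x)`, then `Pl` is
`ad_K`-invariant: `⟨∇Pl(x), [ξ, x]⟩ = 0` for all `ξ ∈ K` and all `x`. -/
theorem shifted_invariant_is_adK_invariant
    {E : Type*} [NormedAddCommGroup E] [InnerProductSpace ℝ E] [FiniteDimensional ℝ E]
    (bk : E →ₗ[ℝ] E →ₗ[ℝ] E)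
    (hskew : ∀ x : E, bk x x = 0)
    (hjac : ∀ x y z : E, bk x (bk y z) = bk (bk x y) z + bk y (bk x z))
    (hinv : ∀ x y z : E, ⟪bk x y, z⟫ = ⟪x, bk y z⟫)
    (K : Submodule ℝ E)
    (hKsub : ∀ x ∈ K, ∀ y ∈ K, bk x y ∈ K)
    (hKp : ∀ x ∈ K, ∀ y ∈ Kᗮ, bk x y ∈ Kᗮ)
    (P : E → ℝ) (hPd : Differentiable ℝ P)
    (hP : ∀ y : E, bk (gradient P y) y = 0)
    (l : ℝ) (Pl : E → ℝ)
    (hPl : ∀ x : E, Pl x =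
      P ((K.orthogonalProjectionOnto x : E) + l • (x - (K.orthogonalProjectionOnto x : E)))) :
    ∀ ξ ∈ K, ∀ x : E, ⟪gradient Pl x, bk ξ x⟫ = 0 := by
  intro ξ hξ x
  have hanti : ∀ a b : E, bk a b = - bk b a := by
    intro a b
    have h := hskew (a + b)
    simp [map_add, hskew] at h
    rw [add_comm] at h
    exact eq_neg_of_add_eq_zero_left h
  -- P is invariant: ⟪∇P y, bk ξ' y⟫ = 0 for any ξ'
  have hPinv : ∀ (y v : E), ⟪gradient P y, bk v y⟫ = 0 := by
    intro y v
    have h1 : ⟪bk (gradient P y) y, v⟫ = ⟪gradient P y, bk y v⟫ := hinv _ _ _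
    rw [hP y] at h1
    rw [inner_zero_left] at h1
    rw [hanti v y, inner_neg_right, ← h1, neg_zero]
  -- the linear map T
  set π : E →L[ℝ] E := K.subtypeL.comp (K.orthogonalProjectionOnto) with hπ
  set T : E →L[ℝ] E := π + l • (ContinuousLinearMap.id ℝ E - π) with hT
  have hTapp : ∀ y : E, T y = (K.orthogonalProjectionOnto y : E) + l • (y - (K.orthogonalProjectionOnto y : E)) := by
    intro y; simp [hT, hπ]
  have hPlT : Pl = P ∘ T := by
    funext y; simp [hPl y, hTapp y, Function.comp]
  -- key bracket identity: T (bk ξ x) = bk ξ (T x)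
  have hπmem : ∀ y ∈ K, π y = y := by
    intro y hy
    simp [hπ, ← Submodule.starProjection_apply, Submodule.starProjection_eq_self_iff.2 hy]
  have hπperp : ∀ y ∈ Kᗮ, π y = 0 := by
    intro y hy
    simp [hπ, Submodule.orthogonalProjectionOnto_apply_of_mem_orthogonal hy]
  have hxdec : x = (K.orthogonalProjectionOnto x : E) + (x - (K.orthogonalProjectionOnto x : E)) := by abel
  have hkmem : (K.orthogonalProjectionOnto x : E) ∈ K := (K.orthogonalProjectionOnto x).2
  have hpmem : x - (K.orthogonalProjectionOnto x : E) ∈ Kᗮ := K.sub_starProjection_mem_orthogonal x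
  have hπbk : π (bk ξ x) = bk ξ (K.orthogonalProjectionOnto x : E) := by
    conv_lhs => rw [hxdec]
    rw [map_add, map_add]
    rw [hπmem _ (hKsub _ hξ _ hkmem), hπperp _ (hKp _ hξ _ hpmem), add_zero]
  have hkey : T (bk ξ x) = bk ξ (T x) := by
    have : T (bk ξ x) = π (bk ξ x) + l • (bk ξ x - π (bk ξ x)) := by simp [hT]
    rw [this, hπbk, hTapp x, map_add, map_smul, map_sub]
  -- gradient computation
  have hTd : DifferentiableAt ℝ T x := T.differentiableAt
  have hPld : DifferentiableAt ℝ Pl x := by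
    rw [hPlT]; exact (hPd (T x)).comp x hTd
  have hgrad : ⟪gradient Pl x, bk ξ x⟫ = fderiv ℝ Pl x (bk ξ x) := by
    rw [hPld.hasGradientAt.hasFDerivAt.fderiv]
    simp [InnerProductSpace.toDual]
  rw [hgrad, hPlT, fderiv_comp x (hPd (T x)) hTd, T.fderiv]
  simp only [ContinuousLinearMap.coe_comp', Function.comp_apply]
  have hgradP : fderiv ℝ P (T x) (T (bk ξ x)) = ⟪gradient P (T x), T (bk ξ x)⟫ := by
    rw [(hPd (T x)).hasGradientAt.hasFDerivAt.fderiv]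
    simp [InnerProductSpace.toDual]
  rw [hgradP, hkey, hPinv]
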